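/- arXiv:1604.04397 — 3 statements merged into one kernel-verified Lean document; each statement's English description precedes it below -/
import Mathlib

section
/- Let L/K be a Galois extension of degree m and θ ∈ Gal(L/K). For x ∈ L^n, the rank over K of the matrix X_θ with rows (θ^i(x_1),…,θ^i(x_n)), i = 0,…,m−1, equals the rank over K of the coordinate matrix ext_β(x) ∈ K^{m×n}, i.e., ω_{θ,K}(x) = ω_B(x). -/
/-- finrank of span of image under injective linear map equals finrank of span. -/
lemma finrank_span_image_eq {K M N : Type*} [Field K] [AddCommGroup M] [Module K M]
    [AddCommGroup N] [Module K N] (f : M →ₗ[K] N) (hf : Function.Injective f)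
    (s : Set M) :
    Module.finrank K (Submodule.span K (f '' s)) = Module.finrank K (Submodule.span K s) := by
  rw [← Submodule.map_span]
  exact (Submodule.equivMapOfInjective f hf _).symm.finrank_eq

/-- ω_{θ,K}(x) = ω_B(x):  for a Galois extension L/K of degree m with Galois
group generated by θ, the K-rank (dimension of the K-span of the columns) of
the matrix X_θ = (θ^i(x_j)) equals the rank over K of the coordinate matrix
ext_β(x). -/
theorem rank_K_theta_matrix_eq_rank_ext (K L : Type*) [Field K] [Field L]
    [Algebra K L] [IsGalois K L] (m : ℕ) (hm : Module.finrank K L = m)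
    (θ : L ≃ₐ[K] L) (hθ : ∀ σ : L ≃ₐ[K] L, σ ∈ Subgroup.zpowers θ)
    (β : Module.Basis (Fin m) K L) (n : ℕ) (x : Fin n → L)
    (Xθ : Matrix (Fin m) (Fin n) L)
    (hXθ : ∀ i j, Xθ i j = (θ ^ (i : ℕ)) (x j))
    (XB : Matrix (Fin m) (Fin n) K) (hXB : ∀ i j, XB i j = β.repr (x j) i) :
    Module.finrank K (Submodule.span K (Set.range fun j : Fin n => fun i : Fin m => Xθ i j))
      = XB.rank := by
  have hm0 : 0 < m := by
    rcases Nat.eq_zero_or_pos m with h | h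
    · subst h
      have : (1 : L) = 0 := β.repr.injective (Subsingleton.elim _ _)
      exact absurd this one_ne_zero
    · exact h
  -- the map y ↦ (θ^i y)_i
  let φ : L →ₗ[K] (Fin m → L) :=
    { toFun := fun y i => (θ ^ (i : ℕ)) y
      map_add' := by intro a b; funext i; simp
      map_smul' := by intro c a; funext i; simp }
  have hφ : Function.Injective φ := by
    intro a b h
    have h0 := congrFun h ⟨0, hm0⟩
    simpa [φ] using h0
  -- the coordinate map
  let ψ : L →ₗ[K] (Fin m → K) :=
    (Finsupp.linearEquivFunOnFinite K K (Fin m)).toLinearMap ∘ₗ β.repr.toLinearMap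
  have hψ : Function.Injective ψ :=
    (Finsupp.linearEquivFunOnFinite K K (Fin m)).injective.comp β.repr.injective
  have hcolθ : (fun j : Fin n => fun i : Fin m => Xθ i j) = φ ∘ x := by
    funext j; funext i; simp [φ, hXθ]
  have hcolB : XB.col = ψ ∘ x := by
    funext j i
    simp [ψ, Matrix.transpose, Matrix.col_apply, hXB, Finsupp.linearEquivFunOnFinite]
    rfl
  rw [hcolθ, Matrix.rank_eq_finrank_span_cols, hcolB, Set.range_comp, Set.range_comp,
    finrank_span_image_eq φ hφ, finrank_span_image_eq ψ hψ]
end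

section
/- Let L/K be a cyclic Galois extension of degree m with Galois group generated by θ, and let g_1,…,g_n ∈ L (n ≤ m) be linearly independent over K. Then the evaluation map sending a θ-polynomial f of degree < k (k ≤ n) to (f(g_1),…,f(g_n)) ∈ L^n is injective, so the Gabidulin code C = {(f(g_1),…,f(g_n)) : f ∈ L[x;θ], deg f < k} is an L-linear code of dimension k. -/
open Finset
open scoped Classical

/-- Moore-matrix row independence: if `g` is `K`-independent and `a` has support of
size at most `r` and gives a relation `∑ j, a j * θ^i (g j) = 0` for all `i < r`,
then `a = 0`. -/
lemma moore_aux {K L : Type*} [Field K] [Field L] [Algebra K L]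
    (θ : L ≃ₐ[K] L) (hfix : ∀ x : L, θ x = x → ∃ c : K, algebraMap K L c = x)
    {n : ℕ} :
    ∀ (N r : ℕ) (a g : Fin n → L),
      LinearIndependent K g →
      (Finset.univ.filter fun j => a j ≠ 0).card ≤ N →
      (Finset.univ.filter fun j => a j ≠ 0).card ≤ r →
      (∀ i < r, ∑ j, a j * (θ ^ i) (g j) = 0) → a = 0 := by
  intro N
  induction N with
  | zero =>
    intro r a g _ hN _ _
    funext j
    simp only [Pi.zero_apply]
    by_contra hj
    have : j ∈ Finset.univ.filter fun j => a j ≠ 0 := by simp [hj]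
    have := Finset.card_pos.mpr ⟨j, this⟩
    omega
  | succ N ih =>
    intro r a g hg hN hr hrel
    by_contra ha
    have hane : ∃ j0, a j0 ≠ 0 := by
      by_contra h
      push_neg at h
      exact ha (funext h)
    obtain ⟨j0, hj0⟩ := hane
    have hj0mem : j0 ∈ Finset.univ.filter fun j => a j ≠ 0 := by simp [hj0]
    have hr1 : 1 ≤ r := le_trans (Finset.card_pos.mpr ⟨j0, hj0mem⟩) hr
    -- new coefficients
    set b : Fin n → L := fun j => θ (a j0) * a j - a j0 * θ (a j) with hb
    have hbj0 : b j0 = 0 := by simp [hb, mul_comm]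
    have hbsupp : (Finset.univ.filter fun j => b j ≠ 0) ⊆
        (Finset.univ.filter fun j => a j ≠ 0).erase j0 := by
      intro j hjmem
      simp only [Finset.mem_filter, Finset.mem_univ, true_and] at hjmem
      rw [Finset.mem_erase]
      constructor
      · rintro rfl; exact hjmem hbj0
      · simp only [Finset.mem_filter, Finset.mem_univ, true_and]
        intro haj
        exact hjmem (by simp [hb, haj])
    have hbcard : (Finset.univ.filter fun j => b j ≠ 0).card ≤
        (Finset.univ.filter fun j => a j ≠ 0).card - 1 := by
      calc (Finset.univ.filter fun j => b j ≠ 0).card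
          ≤ ((Finset.univ.filter fun j => a j ≠ 0).erase j0).card :=
            Finset.card_le_card hbsupp
        _ = (Finset.univ.filter fun j => a j ≠ 0).card - 1 :=
            Finset.card_erase_of_mem hj0mem
    -- independence of θ ∘ g
    have hg' : LinearIndependent K (fun j => θ (g j)) :=
      hg.map' θ.toLinearMap (LinearMap.ker_eq_bot.mpr θ.injective)
    -- relations for b
    have hbrel : ∀ i < r - 1, ∑ j, b j * (θ ^ i) (θ (g j)) = 0 := by
      intro i hi
      have h1 : ∑ j, a j * (θ ^ (i + 1)) (g j) = 0 := hrel (i + 1) (by omega)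
      have h2 : ∑ j, θ (a j) * (θ ^ (i + 1)) (g j) = 0 := by
        have := congrArg θ (hrel i (by omega))
        rw [map_sum, map_zero] at this
        calc ∑ j, θ (a j) * (θ ^ (i + 1)) (g j)
            = ∑ j, θ (a j * (θ ^ i) (g j)) := by
              refine Finset.sum_congr rfl fun j _ => ?_
              rw [map_mul, pow_succ', AlgEquiv.mul_apply]
          _ = 0 := this
      have hθig : ∀ j, (θ ^ i) (θ (g j)) = (θ ^ (i + 1)) (g j) := by
        intro j
        rw [pow_succ, AlgEquiv.mul_apply]
      calc ∑ j, b j * (θ ^ i) (θ (g j))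
          = θ (a j0) * (∑ j, a j * (θ ^ (i+1)) (g j))
            - a j0 * (∑ j, θ (a j) * (θ ^ (i+1)) (g j)) := by
            rw [Finset.mul_sum, Finset.mul_sum, ← Finset.sum_sub_distrib]
            refine Finset.sum_congr rfl fun j _ => ?_
            rw [hθig j, hb]
            ring
        _ = 0 := by rw [h1, h2]; ring
    -- conclude b = 0
    have hb0 : b = 0 := ih (r - 1) b (fun j => θ (g j)) hg'
      (by omega) (by omega) hbrel
    -- so a j / a j0 is fixed by θ
    have hc : ∀ j, ∃ c : K, algebraMap K L c = a j / a j0 := by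
      intro j
      apply hfix
      have hbj : θ (a j0) * a j = a j0 * θ (a j) := by
        have := congrFun hb0 j
        simp only [hb, Pi.zero_apply, sub_eq_zero] at this
        exact this
      have hθj0 : θ (a j0) ≠ 0 := by
        simpa using hj0
      rw [map_div₀, div_eq_div_iff hθj0 hj0]
      linear_combination -hbj
    choose c hcspec using hc
    -- relation at i = 0
    have h0 : ∑ j, a j * g j = 0 := by
      have := hrel 0 (by omega)
      simpa using this
    have hsum : ∑ j, c j • g j = 0 := by
      have : a j0 * ∑ j, (algebraMap K L (c j)) * g j = 0 := by
        rw [Finset.mul_sum]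
        rw [← h0]
        refine Finset.sum_congr rfl fun j _ => ?_
        rw [hcspec j]
        field_simp
      have h2 := (mul_eq_zero.mp this).resolve_left hj0
      rw [← h2]
      refine Finset.sum_congr rfl fun j _ => ?_
      rw [Algebra.smul_def]
    have hcall := (Fintype.linearIndependent_iff.mp hg) c hsum
    have : algebraMap K L (c j0) = 1 := by rw [hcspec j0, div_self hj0]
    have : c j0 = 1 := by
      apply (algebraMap K L).injective
      rw [this, map_one]
    rw [hcall j0] at this
    exact zero_ne_one this

/-- For a cyclic Galois extension L/K of degree m generated by θ and
g₁,…,gₙ ∈ L (n ≤ m) linearly independent over K, the evaluation map sending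
a θ-polynomial f of degree < k (k ≤ n) to (f(g₁),…,f(gₙ)) is injective;
hence the Gabidulin code is an L-linear code of dimension k. -/
theorem gabidulin_evaluation_injective (K L : Type*) [Field K] [Field L]
    [Algebra K L] [IsGalois K L] (m : ℕ) (hm : Module.finrank K L = m)
    (θ : L ≃ₐ[K] L) (hθ : ∀ σ : L ≃ₐ[K] L, σ ∈ Subgroup.zpowers θ)
    (n k : ℕ) (hkn : k ≤ n) (hnm : n ≤ m)
    (g : Fin n → L) (hg : LinearIndependent K g)
    (E : (Fin k → L) → (Fin n → L))
    (hE : ∀ f j, E f j = ∑ i : Fin k, f i * (θ ^ (i : ℕ)) (g j)) :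
    Function.Injective E ∧
      Module.finrank L (Submodule.span L (Set.range E)) = k := by
  rcases Nat.eq_zero_or_pos k with hk0 | hkpos
  · subst hk0
    have hE0 : ∀ f, E f = 0 := by
      intro f
      funext j
      rw [hE]
      simp
    constructor
    · intro f f' _
      funext i
      exact i.elim0
    · have hrange : Set.range E = {0} := by
        ext y
        simp only [Set.mem_range, Set.mem_singleton_iff]
        constructor
        · rintro ⟨f, rfl⟩; exact hE0 f
        · rintro rfl; exact ⟨0, hE0 0⟩
      rw [hrange, Submodule.span_zero_singleton, finrank_bot]
  · -- k > 0, so m > 0 and L/K is finite dimensional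
    have hFD : FiniteDimensional K L :=
      Module.finite_of_finrank_pos (by omega : 0 < Module.finrank K L)
    -- every element fixed by θ lies in K
    have hfix : ∀ x : L, θ x = x → ∃ c : K, algebraMap K L c = x := by
      intro x hx
      have hall : ∀ σ : L ≃ₐ[K] L, σ x = x := by
        intro σ
        have hθs : θ ∈ MulAction.stabilizer (L ≃ₐ[K] L) x := by
          rw [MulAction.mem_stabilizer_iff, AlgEquiv.smul_def]
          exact hx
        have hle : Subgroup.zpowers θ ≤ MulAction.stabilizer (L ≃ₐ[K] L) x :=
          Subgroup.zpowers_le.mpr hθs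
        have := hle (hθ σ)
        rwa [MulAction.mem_stabilizer_iff, AlgEquiv.smul_def] at this
      have hmem : x ∈ IntermediateField.fixedField (⊤ : Subgroup (L ≃ₐ[K] L)) := by
        rintro ⟨σ, -⟩
        exact hall σ
      have hbot : IntermediateField.fixedField (⊤ : Subgroup (L ≃ₐ[K] L)) =
          (⊥ : IntermediateField K L) := by
        have h1 := IsGalois.fixedField_fixingSubgroup (⊥ : IntermediateField K L)
        rwa [IntermediateField.fixingSubgroup_bot] at h1
      rw [hbot, IntermediateField.mem_bot] at hmem
      exact hmem
    -- the k×k Moore matrix on the first k evaluation points is invertible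
    set A : Matrix (Fin k) (Fin k) L :=
      fun j i => (θ ^ (i : ℕ)) (g (Fin.castLE hkn j)) with hA
    have hgk : LinearIndependent K (fun j : Fin k => g (Fin.castLE hkn j)) :=
      hg.comp _ (Fin.castLE_injective hkn)
    have hker : ∀ a : Fin k → L, Matrix.vecMul a A = 0 → a = 0 := by
      intro a hva
      refine moore_aux θ hfix k k a (fun j => g (Fin.castLE hkn j)) hgk ?_ ?_ ?_
      · exact (Finset.card_filter_le _ _).trans (by simp)
      · exact (Finset.card_filter_le _ _).trans (by simp)
      · intro i hi
        have := congrFun hva ⟨i, hi⟩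
        simpa [Matrix.vecMul, dotProduct, hA] using this
    have hvinj : Function.Injective A.vecMul := by
      intro a b h
      have h0 : Matrix.vecMul (a - b) A = 0 := by
        rw [Matrix.sub_vecMul]
        exact sub_eq_zero.mpr h
      have := hker _ h0
      exact sub_eq_zero.mp this
    have hmvinj : Function.Injective A.mulVec :=
      Matrix.mulVec_injective_iff_isUnit.mpr
        (Matrix.vecMul_injective_iff_isUnit.mp hvinj)
    -- injectivity of E
    have hEinj : Function.Injective E := by
      intro f f' hff'
      have hc : ∀ j : Fin n, ∑ i : Fin k, (f i - f' i) * (θ ^ (i : ℕ)) (g j) = 0 := by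
        intro j
        have h1 : E f j = E f' j := congrFun hff' j
        rw [hE, hE] at h1
        calc ∑ i : Fin k, (f i - f' i) * (θ ^ (i : ℕ)) (g j)
            = (∑ i : Fin k, f i * (θ ^ (i : ℕ)) (g j))
              - ∑ i : Fin k, f' i * (θ ^ (i : ℕ)) (g j) := by
              rw [← Finset.sum_sub_distrib]
              exact Finset.sum_congr rfl fun i _ => by ring
          _ = 0 := by rw [h1, sub_self]
      have hmv : A.mulVec (f - f') = 0 := by
        funext j
        have := hc (Fin.castLE hkn j)
        simp only [Pi.zero_apply]
        simpa [Matrix.mulVec, dotProduct, hA, mul_comm, Pi.sub_apply,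
          sub_mul] using this
      have h2 : f - f' = 0 := hmvinj (by rw [hmv, Matrix.mulVec_zero])
      exact sub_eq_zero.mp h2
    refine ⟨hEinj, ?_⟩
    -- E is the linear map given by the n×k Moore matrix B
    set B : Matrix (Fin n) (Fin k) L := fun j i => (θ ^ (i : ℕ)) (g j) with hB
    have hEB : E = ⇑B.mulVecLin := by
      funext f j
      rw [hE, Matrix.mulVecLin_apply]
      simp [Matrix.mulVec, dotProduct, hB, mul_comm]
    have hrange : Set.range E = ↑(LinearMap.range B.mulVecLin) := by
      rw [hEB, LinearMap.coe_range]
    rw [hrange, Submodule.span_eq]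
    have hinj' : Function.Injective B.mulVecLin := hEB ▸ hEinj
    rw [LinearMap.finrank_range_of_inj hinj', Module.finrank_fin_fun]
end

section
/- Let L/K be a cyclic Galois extension of degree m ≥ n with Galois group generated by θ, and g_1,…,g_n ∈ L linearly independent over K. The Gabidulin code C[n,k] = {(f(g_1),…,f(g_n)) : deg f < k} has minimum rank distance d = n − k + 1, where the rank weight of c ∈ L^n is dim_K span_K{c_1,…,c_n}; i.e., every nonzero codeword has rank weight at least n − k + 1. -/
open Finset Module

/-- Key fact: a θ-polynomial of degree < k vanishing on k linearly independent
elements is zero (assuming the fixed field of θ is K). -/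
lemma gabidulin_key {K L : Type*} [Field K] [Field L] [Algebra K L]
    (θ : L ≃ₐ[K] L)
    (hfix : ∀ x : L, θ x = x → ∃ r : K, algebraMap K L r = x) :
    ∀ (k : ℕ) (f : ℕ → L) (v : Fin k → L), LinearIndependent K v →
      (∀ j, ∑ i ∈ Finset.range k, f i * (θ ^ i) (v j) = 0) → ∀ i < k, f i = 0 := by
  intro k
  induction k with
  | zero => intro f v _ _ i hi; omega
  | succ k ih =>
    intro f v hv hroot
    have hvk : v (Fin.last k) ≠ 0 := hv.ne_zero _
    set vk := v (Fin.last k) with hvkdef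
    set u : Fin (k + 1) → L := fun j => vk⁻¹ * v j with hu_def
    have hu : LinearIndependent K u := by
      have he : u = (LinearMap.mulLeft K vk⁻¹) ∘ v := rfl
      rw [he]
      refine hv.map' _ (LinearMap.ker_eq_bot.mpr ?_)
      intro a b hab
      simpa [LinearMap.mulLeft_apply, inv_ne_zero hvk] using
        mul_left_cancel₀ (inv_ne_zero hvk) hab
    have hulast : u (Fin.last k) = 1 := inv_mul_cancel₀ hvk
    set f' : ℕ → L := fun i => f i * (θ ^ i) vk with hf'
    have hroot' : ∀ j, ∑ i ∈ range (k + 1), f' i * (θ ^ i) (u j) = 0 := by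
      intro j
      rw [← hroot j]
      refine Finset.sum_congr rfl fun i _ => ?_
      rw [hf', hu_def]
      rw [mul_assoc, ← map_mul, mul_inv_cancel_left₀ hvk]
    have hsum0 : ∑ i ∈ range (k + 1), f' i = 0 := by
      have := hroot' (Fin.last k); simpa [hulast] using this
    set H : ℕ → L := fun i => -(∑ i' ∈ range i, f' i') with hH
    have hH0 : H 0 = 0 := by simp [hH]
    have hHtop : H (k + 1) = 0 := by simp [hH, hsum0]
    have hstep : ∀ i, f' i = H i - H (i + 1) := by
      intro i; simp [hH, Finset.sum_range_succ]
    have hid : ∀ x : L, ∑ i ∈ range k, H (i + 1) * ((θ ^ i) (θ x - x)) =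
        ∑ i ∈ range (k + 1), f' i * (θ ^ i) x := by
      intro x
      have h1 : ∀ i : ℕ, (θ ^ i) (θ x - x) = (θ ^ (i + 1)) x - (θ ^ i) x := by
        intro i
        rw [map_sub, pow_succ, AlgEquiv.mul_apply]
      have h2 : ∑ i ∈ range (k + 1), f' i * (θ ^ i) x =
          ∑ i ∈ range (k + 1), H i * (θ ^ i) x -
            ∑ i ∈ range (k + 1), H (i + 1) * (θ ^ i) x := by
        rw [← Finset.sum_sub_distrib]
        refine Finset.sum_congr rfl fun i _ => ?_
        rw [hstep i]; ring
      rw [h2, Finset.sum_range_succ' (fun i => H i * (θ ^ i) x) k,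
        Finset.sum_range_succ (fun i => H (i + 1) * (θ ^ i) x) k, hH0, hHtop]
      simp only [zero_mul, add_zero]
      rw [← Finset.sum_sub_distrib]
      refine Finset.sum_congr rfl fun i _ => ?_
      rw [h1 i]; ring
    set w : Fin k → L := fun j => θ (u (Fin.castSucc j)) - u (Fin.castSucc j) with hw_def
    have hrootw : ∀ j, ∑ i ∈ range k, H (i + 1) * (θ ^ i) (w j) = 0 := by
      intro j
      rw [hw_def]
      simp only
      rw [hid (u (Fin.castSucc j))]
      exact hroot' (Fin.castSucc j)
    have hw : LinearIndependent K w := by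
      rw [Fintype.linearIndependent_iff]
      intro a ha
      set s : L := ∑ j, a j • u (Fin.castSucc j) with hs_def
      have hθs : θ s = s := by
        have h3 : θ s - s = ∑ j, a j • w j := by
          rw [hs_def, map_sum, ← Finset.sum_sub_distrib]
          refine Finset.sum_congr rfl fun j _ => ?_
          rw [map_smul, hw_def, smul_sub]
        have h4 : θ s - s = 0 := by rw [h3, ha]
        exact sub_eq_zero.mp h4
      obtain ⟨r, hr⟩ := hfix s hθs
      set b : Fin (k + 1) → K := Fin.snoc a (-r) with hb_def
      have hbsum : ∑ j, b j • u j = 0 := by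
        rw [Fin.sum_univ_castSucc]
        have hbc : ∀ j : Fin k, b (Fin.castSucc j) = a j := by
          intro j; rw [hb_def]; simp
        have hbl : b (Fin.last k) = -r := by rw [hb_def]; simp
        rw [hbl, hulast]
        have : ∑ j : Fin k, b (Fin.castSucc j) • u (Fin.castSucc j) = s := by
          rw [hs_def]
          exact Finset.sum_congr rfl fun j _ => by rw [hbc j]
        rw [this]
        rw [← hr, Algebra.algebraMap_eq_smul_one]
        simp
      have hb0 := Fintype.linearIndependent_iff.mp hu b hbsum
      intro i
      have := hb0 (Fin.castSucc i)
      rwa [hb_def, Fin.snoc_castSucc] at this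
    have hHzero : ∀ i < k, H (i + 1) = 0 := ih (fun i => H (i + 1)) w hw hrootw
    have hHall : ∀ i ≤ k + 1, H i = 0 := by
      intro i hi
      match i, hi with
      | 0, _ => exact hH0
      | (j+1), hj =>
        rcases Nat.lt_or_ge j k with h | h
        · exact hHzero j h
        · have hjk : j = k := by omega
          subst hjk; exact hHtop
    have hf'zero : ∀ i < k + 1, f' i = 0 := by
      intro i hi
      rw [hstep i, hHall i (by omega), hHall (i + 1) (by omega)]
      ring
    intro i hi
    have h5 : f i * (θ ^ i) vk = 0 := hf'zero i hi
    rcases mul_eq_zero.mp h5 with h | h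
    · exact h
    · exfalso
      apply hvk
      have : (θ ^ i) vk = (θ ^ i) 0 := by rw [h, map_zero]
      exact (θ ^ i).injective this

/-- The Gabidulin code C[n,k] has minimum rank distance n − k + 1: every
nonzero codeword (f(g₁),…,f(gₙ)), deg f < k, has rank weight (the K-dimension
of the K-span of its entries) at least n − k + 1. -/
theorem gabidulin_minimum_rank_distance (K L : Type*) [Field K] [Field L]
    [Algebra K L] [IsGalois K L] (m : ℕ) (hm : Module.finrank K L = m)
    (θ : L ≃ₐ[K] L) (hθ : ∀ σ : L ≃ₐ[K] L, σ ∈ Subgroup.zpowers θ)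
    (n k : ℕ) (hkn : k ≤ n) (hnm : n ≤ m)
    (g : Fin n → L) (hg : LinearIndependent K g)
    (f : Fin k → L) (c : Fin n → L)
    (hc : ∀ j, c j = ∑ i : Fin k, f i * (θ ^ (i : ℕ)) (g j)) (hc0 : c ≠ 0) :
    n - k + 1 ≤ Module.finrank K (Submodule.span K (Set.range c)) := by
  -- n > 0 and k > 0
  rcases Nat.eq_zero_or_pos n with hn0 | hn0
  · exfalso; apply hc0; funext j; exact absurd j.2 (by omega)
  rcases Nat.eq_zero_or_pos k with hk0 | hk0
  · exfalso; apply hc0; funext j; rw [hc j]; subst hk0; simp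
  -- finite dimensional
  have hfd : FiniteDimensional K L := FiniteDimensional.of_finrank_pos (by omega)
  -- fixed field fact
  have hfix : ∀ x : L, θ x = x → ∃ r : K, algebraMap K L r = x := by
    intro x hx
    have hall : ∀ σ : L ≃ₐ[K] L, σ x = x := by
      intro σ
      have hst : θ ∈ MulAction.stabilizer (L ≃ₐ[K] L) x := hx
      have : Subgroup.zpowers θ ≤ MulAction.stabilizer (L ≃ₐ[K] L) x :=
        Subgroup.zpowers_le.mpr hst
      exact this (hθ σ)
    have hmem : x ∈ IntermediateField.fixedField
        (IntermediateField.fixingSubgroup (⊥ : IntermediateField K L)) := by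
      intro σ
      exact hall σ.1
    rw [IsGalois.fixedField_fixingSubgroup ⊥] at hmem
    obtain ⟨r, hr⟩ := IntermediateField.mem_bot.mp hmem
    exact ⟨r, hr⟩
  -- the evaluation map as a linear map
  set T : L →ₗ[K] L :=
    { toFun := fun x => ∑ i : Fin k, f i * (θ ^ (i : ℕ)) x
      map_add' := by intro a b; simp [mul_add, Finset.sum_add_distrib]
      map_smul' := by
        intro r a
        simp only [map_smul, RingHom.id_apply, Finset.smul_sum]
        refine Finset.sum_congr rfl fun i _ => ?_
        rw [mul_smul_comm] } with hT
  have hcT : c = T ∘ g := by funext j; rw [hc j]; rfl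
  set W : Submodule K L := Submodule.span K (Set.range g) with hW
  have hWfin : FiniteDimensional K W := inferInstance
  have hWrank : finrank K W = n := by
    rw [hW, finrank_span_eq_card hg, Fintype.card_fin]
  set S : W →ₗ[K] L := T ∘ₗ W.subtype with hS
  have hrange : LinearMap.range S = Submodule.span K (Set.range c) := by
    rw [hS, LinearMap.range_comp, Submodule.range_subtype, hcT, Set.range_comp,
      ← Submodule.map_span]
  have hrn : finrank K (LinearMap.range S) + finrank K (LinearMap.ker S) = n := by
    rw [LinearMap.finrank_range_add_finrank_ker S, hWrank]
  have hker : finrank K (LinearMap.ker S) < k := by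
    by_contra hcon
    push_neg at hcon
    obtain ⟨e, he⟩ := exists_linearIndependent_of_le_finrank hcon
    set v : Fin k → L := fun j => ((e j : W) : L) with hv_def
    have hv : LinearIndependent K v := by
      have h1 : LinearIndependent K (fun j => ((e j : W))) :=
        he.map_injOn (LinearMap.ker S).subtype Subtype.val_injective.injOn
      exact h1.map' W.subtype (Submodule.ker_subtype _)
    have hvz : ∀ j, ∑ i : Fin k, f i * (θ ^ (i : ℕ)) (v j) = 0 := by
      intro j
      have : S (e j) = 0 := (e j).2
      exact this
    set ftil : ℕ → L := fun i => if h : i < k then f ⟨i, h⟩ else 0 with hftil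
    have hvz' : ∀ j, ∑ i ∈ Finset.range k, ftil i * (θ ^ i) (v j) = 0 := by
      intro j
      rw [Finset.sum_range fun i => ftil i * (θ ^ i) (v j)]
      rw [← hvz j]
      refine Finset.sum_congr rfl fun i _ => ?_
      rw [hftil]
      simp [i.2]
    have hfz := gabidulin_key θ hfix k ftil v hv hvz'
    apply hc0
    funext j
    rw [hc j]
    refine Finset.sum_eq_zero fun i _ => ?_
    have := hfz i i.2
    rw [hftil] at this
    simp only [i.2, dif_pos] at this
    simp [this]
  rw [← hrange]
  omega
end
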